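/- Let γ₂ > 2γ₀ ≥ 0 and C > 0. There exist k₁ = k₁(C, γ₀, γ₂) > 0 and C′ = C′(C, γ₀, γ₂) > 0 with the following property. Suppose k₀ ≥ k₁ and λ : ℝ² → ℝ is of class C² with λ(k) = |k|² for |k| < k₀ and |D^m(λ(k) − |k|²)| ≤ C |k|^{−γ₂ + γ₀|m|} for all multi-indices m with |m| ≤ 2 and all |k| ≥ k₀. Then for every z ∈ ℝ² the equation ∇λ(k) = z has exactly one solution k*(z) ∈ ℝ², and for every z with |z| ≥ 4k₀ one has |k*(z) − z/2| ≤ C′ |z|^{−(γ₂ − γ₀)}. -/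

import Mathlib

open MeasureTheory

/-- Partial derivative in the `i`-th coordinate direction (real-valued functions). -/
noncomputable def pdR (i : Fin 2) (f : EuclideanSpace ℝ (Fin 2) → ℝ) :
    EuclideanSpace ℝ (Fin 2) → ℝ :=
  fun x => fderiv ℝ f x (EuclideanSpace.single i 1)

/-- The iterated partial derivative `D^m = ∂₁^{m₁} ∂₂^{m₂}` for a multi-index `m = (m₁, m₂)`. -/
noncomputable def DmR (m : ℕ × ℕ) (f : EuclideanSpace ℝ (Fin 2) → ℝ) :
    EuclideanSpace ℝ (Fin 2) → ℝ :=
  (pdR 0)^[m.1] ((pdR 1)^[m.2] f)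

open InnerProductSpace

noncomputable def ee (i : Fin 2) : EuclideanSpace ℝ (Fin 2) := EuclideanSpace.single i 1

lemma aux_decomp (v : EuclideanSpace ℝ (Fin 2)) : v = v 0 • ee 0 + v 1 • ee 1 := by
  ext j; fin_cases j <;> simp [ee, EuclideanSpace.single_apply]

lemma aux_norm_le (v : EuclideanSpace ℝ (Fin 2)) : ‖v‖ ≤ |v 0| + |v 1| := by
  calc ‖v‖ = ‖v 0 • ee 0 + v 1 • ee 1‖ := by rw [← aux_decomp]
    _ ≤ ‖v 0 • ee 0‖ + ‖v 1 • ee 1‖ := norm_add_le _ _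
    _ = |v 0| + |v 1| := by
        rw [norm_smul, norm_smul]
        simp [ee, EuclideanSpace.norm_single, Real.norm_eq_abs]

lemma aux_coord_le (v : EuclideanSpace ℝ (Fin 2)) (j : Fin 2) : |v j| ≤ ‖v‖ := by
  have h := norm_inner_le_norm (𝕜 := ℝ) (ee j) v
  simpa [ee, EuclideanSpace.inner_single_left, EuclideanSpace.norm_single, Real.norm_eq_abs] using h

lemma aux_grad_coord (f : EuclideanSpace ℝ (Fin 2) → ℝ) (x : EuclideanSpace ℝ (Fin 2)) (i : Fin 2) :
    gradient f x i = fderiv ℝ f x (ee i) := by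
  have h1 : ⟪gradient f x, ee i⟫_ℝ = fderiv ℝ f x (ee i) := toDual_symm_apply
  rw [ee, EuclideanSpace.inner_single_right] at h1
  simpa only [ee, one_mul, conj_trivial] using h1

lemma aux_pd_hasFDeriv (f : EuclideanSpace ℝ (Fin 2) → ℝ)
    (hf1 : Differentiable ℝ (fderiv ℝ f)) (i : Fin 2) (k : EuclideanSpace ℝ (Fin 2)) :
    HasFDerivAt (pdR i f)
      ((ContinuousLinearMap.apply ℝ ℝ (ee i)).comp (fderiv ℝ (fderiv ℝ f) k)) k :=
  ((ContinuousLinearMap.apply ℝ ℝ (ee i)).hasFDerivAt).comp k (hf1 k).hasFDerivAt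

lemma aux_symm (f : EuclideanSpace ℝ (Fin 2) → ℝ) (hf : Differentiable ℝ f)
    (hf1 : Differentiable ℝ (fderiv ℝ f)) (k v w : EuclideanSpace ℝ (Fin 2)) :
    fderiv ℝ (fderiv ℝ f) k v w = fderiv ℝ (fderiv ℝ f) k w v :=
  second_derivative_symmetric_of_eventually_of_real
    (Filter.Eventually.of_forall fun y => (hf y).hasFDerivAt) ((hf1 k).hasFDerivAt) v w

set_option maxHeartbeats 2000000 in
/-- Stationary-point lemma: if `λ` is `C²`, equals `|k|²` for `|k| < k₀`, and
`|D^m(λ(k) − |k|²)| ≤ C |k|^{−γ₂+γ₀|m|}` for `|m| ≤ 2` and `|k| ≥ k₀`, with `γ₂ > 2γ₀ ≥ 0`,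
then for `k₀` large the equation `∇λ(k) = z` has exactly one solution `k*(z)`, and
`|k*(z) − z/2| ≤ C′ |z|^{−(γ₂−γ₀)}` whenever `|z| ≥ 4k₀`. -/
theorem stmt_9 (γ₀ γ₂ C : ℝ) (hγ₀ : 0 ≤ γ₀) (hγ : 2 * γ₀ < γ₂) (hC : 0 < C) :
    ∃ k₁ C' : ℝ, 0 < k₁ ∧ 0 < C' ∧
    ∀ k₀ : ℝ, k₁ ≤ k₀ →
    ∀ lam : EuclideanSpace ℝ (Fin 2) → ℝ, ContDiff ℝ 2 lam →
    (∀ k : EuclideanSpace ℝ (Fin 2), ‖k‖ < k₀ → lam k = ‖k‖ ^ 2) →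
    (∀ m : ℕ × ℕ, m.1 + m.2 ≤ 2 → ∀ k : EuclideanSpace ℝ (Fin 2), k₀ ≤ ‖k‖ →
      |DmR m (fun y => lam y - ‖y‖ ^ 2) k| ≤ C * ‖k‖ ^ (-γ₂ + γ₀ * ((m.1 + m.2 : ℕ) : ℝ))) →
    (∀ z : EuclideanSpace ℝ (Fin 2),
        ∃! kstar : EuclideanSpace ℝ (Fin 2), gradient lam kstar = z) ∧
    (∀ z : EuclideanSpace ℝ (Fin 2), 4 * k₀ ≤ ‖z‖ →
      ∀ kstar : EuclideanSpace ℝ (Fin 2), gradient lam kstar = z →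
        ‖kstar - (1 / 2 : ℝ) • z‖ ≤ C' * ‖z‖ ^ (-(γ₂ - γ₀))) := by
  have ha : 0 < γ₂ - 2 * γ₀ := by linarith
  have hb : 0 < γ₂ - γ₀ := by linarith
  refine ⟨max 1 ((8 * C) ^ ((γ₂ - 2 * γ₀)⁻¹)), C * 4 ^ (γ₂ - γ₀),
    lt_of_lt_of_le one_pos (le_max_left _ _),
    mul_pos hC (Real.rpow_pos_of_pos (by norm_num) _), ?_⟩
  intro k₀ hk₀ lam hlam hloc hbd
  have hk01 : (1 : ℝ) ≤ k₀ := le_trans (le_max_left _ _) hk₀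
  have hk0pos : (0 : ℝ) < k₀ := by linarith
  -- the smallness of `ε := C k₀^{-(γ₂-2γ₀)}`
  have hka : 8 * C ≤ k₀ ^ (γ₂ - 2 * γ₀) := by
    have h1 : (8 * C) ^ ((γ₂ - 2 * γ₀)⁻¹) ≤ k₀ := le_trans (le_max_right _ _) hk₀
    have h2 : ((8 * C) ^ ((γ₂ - 2 * γ₀)⁻¹)) ^ (γ₂ - 2 * γ₀) ≤ k₀ ^ (γ₂ - 2 * γ₀) :=
      Real.rpow_le_rpow (Real.rpow_nonneg (by positivity) _) h1 ha.le
    rwa [← Real.rpow_mul (by positivity), inv_mul_cancel₀ ha.ne', Real.rpow_one] at h2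
  set ε : ℝ := C * k₀ ^ (-(γ₂ - 2 * γ₀)) with hεdef
  have hεpos : 0 < ε := mul_pos hC (Real.rpow_pos_of_pos hk0pos _)
  have hε : ε ≤ 1 / 8 := by
    have hpow : (0 : ℝ) < k₀ ^ (γ₂ - 2 * γ₀) := Real.rpow_pos_of_pos hk0pos _
    have : ε = C / k₀ ^ (γ₂ - 2 * γ₀) := by
      rw [hεdef, Real.rpow_neg hk0pos.le, div_eq_mul_inv]
    rw [this, div_le_iff₀ hpow]
    nlinarith
  set h : EuclideanSpace ℝ (Fin 2) → ℝ := fun y => lam y - ‖y‖ ^ 2 with hdef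
  have hh : ContDiff ℝ 2 h := hlam.sub (contDiff_norm_sq ℝ)
  have hdiff : Differentiable ℝ h := hh.differentiable (by norm_num)
  have hdiff1 : Differentiable ℝ (fderiv ℝ h) :=
    (hh.fderiv_right (m := 1) (by norm_num)).differentiable (by norm_num)
  set D2 := fderiv ℝ (fderiv ℝ h) with hD2def
  -- inside the ball, h vanishes
  have hballz : ∀ y ∈ Metric.ball (0 : EuclideanSpace ℝ (Fin 2)) k₀, h y = 0 := by
    intro y hy
    rw [Metric.mem_ball, dist_zero_right] at hy
    simp [hdef, hloc y hy]
  have hfz : ∀ y : EuclideanSpace ℝ (Fin 2), ‖y‖ < k₀ → fderiv ℝ h y = 0 := by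
    intro y hy
    have hmem : y ∈ Metric.ball (0 : EuclideanSpace ℝ (Fin 2)) k₀ := by
      rw [Metric.mem_ball, dist_zero_right]; exact hy
    have heq : h =ᶠ[nhds y] fun _ => (0 : ℝ) :=
      Filter.eventuallyEq_of_mem (Metric.isOpen_ball.mem_nhds hmem) hballz
    rw [heq.fderiv_eq, fderiv_const_apply]
  have hD2z : ∀ k : EuclideanSpace ℝ (Fin 2), ‖k‖ < k₀ → D2 k = 0 := by
    intro k hk
    have hmem : k ∈ Metric.ball (0 : EuclideanSpace ℝ (Fin 2)) k₀ := by
      rw [Metric.mem_ball, dist_zero_right]; exact hk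
    have heq : fderiv ℝ h =ᶠ[nhds k] fun _ => (0 : EuclideanSpace ℝ (Fin 2) →L[ℝ] ℝ) := by
      filter_upwards [Metric.isOpen_ball.mem_nhds hmem] with y hy
      exact hfz y (by rwa [Metric.mem_ball, dist_zero_right] at hy)
    rw [hD2def, heq.fderiv_eq, fderiv_const_apply]
  -- pointwise entry bounds
  have hexp2 : -γ₂ + γ₀ * ((2 : ℕ) : ℝ) = -(γ₂ - 2 * γ₀) := by push_cast; ring
  have hrbound : ∀ k : EuclideanSpace ℝ (Fin 2), k₀ ≤ ‖k‖ →
      C * ‖k‖ ^ (-γ₂ + γ₀ * ((2 : ℕ) : ℝ)) ≤ ε := by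
    intro k hk
    rw [hexp2, hεdef]
    exact mul_le_mul_of_nonneg_left
      (Real.rpow_le_rpow_of_nonpos hk0pos hk (by linarith)) hC.le
  have key : ∀ (k : EuclideanSpace ℝ (Fin 2)) (i' j' : Fin 2),
      D2 k (ee j') (ee i') = pdR j' (pdR i' h) k := by
    intro k i' j'
    have hf := (aux_pd_hasFDeriv h hdiff1 i' k).fderiv
    have : pdR j' (pdR i' h) k = fderiv ℝ (pdR i' h) k (EuclideanSpace.single j' 1) := rfl
    rw [this, hf]
    rfl
  have hentry : ∀ k : EuclideanSpace ℝ (Fin 2), ∀ i j : Fin 2, |D2 k (ee j) (ee i)| ≤ ε := by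
    intro k i j
    rcases lt_or_ge ‖k‖ k₀ with hk | hk
    · rw [hD2z k hk]; simpa using hεpos.le
    · have hsy := aux_symm h hdiff hdiff1 k
      have h20 := hbd (2, 0) (by norm_num) k hk
      have h11 := hbd (1, 1) (by norm_num) k hk
      have h02 := hbd (0, 2) (by norm_num) k hk
      have e20 : DmR (2, 0) h = pdR 0 (pdR 0 h) := rfl
      have e11 : DmR (1, 1) h = pdR 0 (pdR 1 h) := rfl
      have e02 : DmR (0, 2) h = pdR 1 (pdR 1 h) := rfl
      have hbnd := hrbound k hk
      have b00 : |D2 k (ee 0) (ee 0)| ≤ ε := by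
        rw [key k 0 0]
        calc |pdR 0 (pdR 0 h) k| = |DmR (2,0) h k| := by rw [e20]
          _ ≤ _ := h20
          _ ≤ ε := by simpa using hbnd
      have b01 : |D2 k (ee 0) (ee 1)| ≤ ε := by
        rw [key k 1 0]
        calc |pdR 0 (pdR 1 h) k| = |DmR (1,1) h k| := by rw [e11]
          _ ≤ _ := h11
          _ ≤ ε := by simpa using hbnd
      have b10 : |D2 k (ee 1) (ee 0)| ≤ ε := by
        rw [show D2 k (ee 1) (ee 0) = D2 k (ee 0) (ee 1) from hsy (ee 1) (ee 0)]
        exact b01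
      have b11 : |D2 k (ee 1) (ee 1)| ≤ ε := by
        rw [key k 1 1]
        calc |pdR 1 (pdR 1 h) k| = |DmR (0,2) h k| := by rw [e02]
          _ ≤ _ := h02
          _ ≤ ε := by simpa using hbnd
      fin_cases i <;> fin_cases j
      · exact b00
      · exact b10
      · exact b01
      · exact b11
  -- operator norm bound on the derivative of each partial derivative
  have hop : ∀ (i : Fin 2) (k : EuclideanSpace ℝ (Fin 2)),
      ‖fderiv ℝ (pdR i h) k‖ ≤ 2 * ε := by
    intro i k
    rw [(aux_pd_hasFDeriv h hdiff1 i k).fderiv]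
    refine ContinuousLinearMap.opNorm_le_bound _ (by positivity) fun w => ?_
    have hw : ((ContinuousLinearMap.apply ℝ ℝ (ee i)).comp (fderiv ℝ (fderiv ℝ h) k)) w
        = D2 k w (ee i) := rfl
    rw [hw, Real.norm_eq_abs]
    have hdecomp : D2 k w (ee i) = w 0 * D2 k (ee 0) (ee i) + w 1 * D2 k (ee 1) (ee i) := by
      conv_lhs => rw [aux_decomp w]
      simp
    rw [hdecomp]
    have h0 := hentry k i 0
    have h1 := hentry k i 1
    have c0 := aux_coord_le w 0
    have c1 := aux_coord_le w 1
    have hwn : (0:ℝ) ≤ ‖w‖ := norm_nonneg w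
    calc |w 0 * D2 k (ee 0) (ee i) + w 1 * D2 k (ee 1) (ee i)|
        ≤ |w 0 * D2 k (ee 0) (ee i)| + |w 1 * D2 k (ee 1) (ee i)| := abs_add_le _ _
      _ = |w 0| * |D2 k (ee 0) (ee i)| + |w 1| * |D2 k (ee 1) (ee i)| := by
          rw [abs_mul, abs_mul]
      _ ≤ ‖w‖ * ε + ‖w‖ * ε := by
          have m0 := mul_le_mul c0 h0 (abs_nonneg _) hwn
          have m1 := mul_le_mul c1 h1 (abs_nonneg _) hwn
          linarith
      _ = 2 * ε * ‖w‖ := by ring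
  -- Lipschitz bound for each partial derivative of h
  have hlip : ∀ (i : Fin 2) (x y : EuclideanSpace ℝ (Fin 2)),
      |pdR i h x - pdR i h y| ≤ 2 * ε * ‖x - y‖ := by
    intro i x y
    have := Convex.norm_image_sub_le_of_norm_fderiv_le
      (f := pdR i h) (C := 2 * ε) (s := Set.univ)
      (fun u _ => (aux_pd_hasFDeriv h hdiff1 i u).differentiableAt)
      (fun u _ => hop i u) convex_univ (Set.mem_univ y) (Set.mem_univ x)
    simpa [Real.norm_eq_abs] using this
  -- gradient of h : coordinates, Lipschitz and bounds
  have hgc : ∀ (x : EuclideanSpace ℝ (Fin 2)) (i : Fin 2), gradient h x i = pdR i h x :=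
    fun x i => aux_grad_coord h x i
  have hglip : ∀ x y : EuclideanSpace ℝ (Fin 2),
      ‖gradient h x - gradient h y‖ ≤ 4 * ε * ‖x - y‖ := by
    intro x y
    have hle := aux_norm_le (gradient h x - gradient h y)
    have hc : ∀ i : Fin 2, (gradient h x - gradient h y) i = pdR i h x - pdR i h y := by
      intro i
      have : (gradient h x - gradient h y) i = gradient h x i - gradient h y i := rfl
      rw [this, hgc, hgc]
    rw [hc 0, hc 1] at hle
    have l0 := hlip 0 x y
    have l1 := hlip 1 x y
    linarith
  have hgz : ∀ x : EuclideanSpace ℝ (Fin 2), ‖x‖ < k₀ → gradient h x = 0 := by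
    intro x hx
    have : gradient h x = (InnerProductSpace.toDual ℝ _).symm (fderiv ℝ h x) := rfl
    rw [this, hfz x hx]
    simp
  have hexp1 : -γ₂ + γ₀ * ((1 : ℕ) : ℝ) = -(γ₂ - γ₀) := by push_cast; ring
  have hgbd1 : ∀ x : EuclideanSpace ℝ (Fin 2), k₀ ≤ ‖x‖ →
      ‖gradient h x‖ ≤ 2 * C * ‖x‖ ^ (-(γ₂ - γ₀)) := by
    intro x hx
    have hle := aux_norm_le (gradient h x)
    rw [hgc, hgc] at hle
    have h10 := hbd (1, 0) (by norm_num) x hx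
    have h01 := hbd (0, 1) (by norm_num) x hx
    have e10 : DmR (1, 0) h = pdR 0 h := rfl
    have e01 : DmR (0, 1) h = pdR 1 h := rfl
    rw [e10] at h10
    rw [e01] at h01
    rw [show ((((1:ℕ),(0:ℕ)).1 + ((1:ℕ),(0:ℕ)).2 : ℕ) : ℝ) = ((1:ℕ):ℝ) by norm_num, hexp1] at h10
    rw [show ((((0:ℕ),(1:ℕ)).1 + ((0:ℕ),(1:ℕ)).2 : ℕ) : ℝ) = ((1:ℕ):ℝ) by norm_num, hexp1] at h01
    have a0 : |pdR 0 h x| ≤ C * ‖x‖ ^ (-(γ₂ - γ₀)) := h10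
    have a1 : |pdR 1 h x| ≤ C * ‖x‖ ^ (-(γ₂ - γ₀)) := h01
    linarith
  -- global bound on the gradient of h
  have hgbd : ∀ x : EuclideanSpace ℝ (Fin 2), ‖gradient h x‖ ≤ 1 / 4 := by
    intro x
    rcases lt_or_ge ‖x‖ k₀ with hx | hx
    · rw [hgz x hx]; norm_num
    · have h1 := hgbd1 x hx
      have h2 : ‖x‖ ^ (-(γ₂ - γ₀)) ≤ k₀ ^ (-(γ₂ - γ₀)) :=
        Real.rpow_le_rpow_of_nonpos hk0pos hx (by linarith)
      have h3 : k₀ ^ (-(γ₂ - γ₀)) ≤ k₀ ^ (-(γ₂ - 2 * γ₀)) :=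
        Real.rpow_le_rpow_of_exponent_le hk01 (by linarith)
      have h4 : 2 * C * ‖x‖ ^ (-(γ₂ - γ₀)) ≤ 2 * ε := by
        rw [hεdef]
        have := le_trans h2 h3
        nlinarith [Real.rpow_pos_of_pos hk0pos (-(γ₂ - 2 * γ₀))]
      linarith
  -- gradient of lam
  have grad_lam : ∀ k : EuclideanSpace ℝ (Fin 2),
      gradient lam k = (2 : ℝ) • k + gradient h k := by
    intro k
    apply ext_inner_right ℝ
    intro v
    have hL : ⟪gradient lam k, v⟫_ℝ = fderiv ℝ lam k v := InnerProductSpace.toDual_symm_apply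
    have hH : ⟪gradient h k, v⟫_ℝ = fderiv ℝ h k v := InnerProductSpace.toDual_symm_apply
    have hfun : lam = fun y => h y + ‖y‖ ^ 2 := by
      funext y; simp [hdef]
    have hnd : DifferentiableAt ℝ (fun y : EuclideanSpace ℝ (Fin 2) => ‖y‖ ^ 2) k :=
      ((contDiff_norm_sq ℝ (n := 1)).differentiable one_ne_zero) k
    have hadd : fderiv ℝ lam k = fderiv ℝ h k + fderiv ℝ (fun y => ‖y‖ ^ 2) k := by
      conv_lhs => rw [hfun]
      exact fderiv_add (hdiff k) hnd
    have hns : fderiv ℝ (fun y : EuclideanSpace ℝ (Fin 2) => ‖y‖ ^ 2) k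
        = 2 • (innerSL ℝ k) := (hasStrictFDerivAt_norm_sq k).hasFDerivAt.fderiv
    rw [hL, hadd, inner_add_left, hH]
    have : (fderiv ℝ h k + fderiv ℝ (fun y => ‖y‖ ^ 2) k) v
        = fderiv ℝ h k v + fderiv ℝ (fun y => ‖y‖ ^ 2) k v := rfl
    rw [this, hns]
    have h2v : (2 • (innerSL ℝ k)) v = 2 * ⟪k, v⟫_ℝ := by
      rw [ContinuousLinearMap.smul_apply, innerSL_apply_apply, nsmul_eq_mul]
      norm_num
    rw [h2v, real_inner_smul_left]
    ring
  -- the contraction, for a fixed z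
  have main : ∀ z : EuclideanSpace ℝ (Fin 2),
      ∃! kstar : EuclideanSpace ℝ (Fin 2), gradient lam kstar = z := by
    intro z
    set T : EuclideanSpace ℝ (Fin 2) → EuclideanSpace ℝ (Fin 2) :=
      fun k => (2 : ℝ)⁻¹ • (z - gradient h k) with hTdef
    have hTlip : LipschitzWith (1/4 : NNReal) T := by
      apply LipschitzWith.of_dist_le_mul
      intro x y
      rw [dist_eq_norm, dist_eq_norm]
      have : T x - T y = (2 : ℝ)⁻¹ • (gradient h y - gradient h x) := by
        rw [hTdef]; module
      rw [this, norm_smul]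
      have := hglip y x
      have hcoe : ((1/4 : NNReal) : ℝ) = 1/4 := by norm_num
      rw [hcoe]
      have hnn : ‖y - x‖ = ‖x - y‖ := norm_sub_rev y x
      rw [hnn] at this
      have hεb : 4 * ε ≤ 1/2 := by linarith
      have hnv : (0:ℝ) ≤ ‖x - y‖ := norm_nonneg _
      calc ‖(2:ℝ)⁻¹‖ * ‖gradient h y - gradient h x‖
          = (2:ℝ)⁻¹ * ‖gradient h y - gradient h x‖ := by norm_num
        _ ≤ (2:ℝ)⁻¹ * (4 * ε * ‖x - y‖) := by
            apply mul_le_mul_of_nonneg_left this (by norm_num)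
        _ ≤ 1/4 * ‖x - y‖ := by nlinarith
    have hcontr : ContractingWith (1/4 : NNReal) T :=
      ⟨by rw [← NNReal.coe_lt_coe]; norm_num, hTlip⟩
    have hfix_iff : ∀ k : EuclideanSpace ℝ (Fin 2), T k = k ↔ gradient lam k = z := by
      intro k
      have hTk : T k = (2 : ℝ)⁻¹ • (z - gradient h k) := rfl
      rw [hTk, grad_lam k]
      constructor
      · intro hfx
        have h2 : (2:ℝ) • ((2 : ℝ)⁻¹ • (z - gradient h k)) = (2:ℝ) • k := by rw [hfx]
        rw [smul_smul] at h2
        norm_num at h2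
        rw [← h2]; module
      · intro hgl
        have : z - gradient h k = (2:ℝ) • k := by rw [← hgl]; module
        rw [this, smul_smul]
        norm_num
    refine ⟨ContractingWith.fixedPoint T hcontr, (hfix_iff _).1 hcontr.fixedPoint_isFixedPt, ?_⟩
    intro y hy
    have hyfix : T y = y := (hfix_iff y).2 hy
    have hd := hTlip.dist_le_mul y (ContractingWith.fixedPoint T hcontr)
    rw [hyfix, hcontr.fixedPoint_isFixedPt] at hd
    have hcoe : ((1/4 : NNReal) : ℝ) = 1/4 := by norm_num
    rw [hcoe] at hd
    have := dist_nonneg (x := y) (y := ContractingWith.fixedPoint T hcontr)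
    have hz : dist y (ContractingWith.fixedPoint T hcontr) ≤ 0 := by linarith
    exact dist_le_zero.1 hz
  refine ⟨main, ?_⟩
  -- quantitative estimate
  intro z hz kstar hks
  have hfixed : (2 : ℝ) • kstar + gradient h kstar = z := by
    rw [grad_lam kstar] at hks; exact hks
  have hdiffeq : kstar - (1/2 : ℝ) • z = -((1/2 : ℝ) • gradient h kstar) := by
    rw [← hfixed]; module
  have hnorm : ‖kstar - (1/2 : ℝ) • z‖ = (1/2) * ‖gradient h kstar‖ := by
    rw [hdiffeq, norm_neg, norm_smul]
    norm_num
  -- lower bound on ‖kstar‖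
  have hzz : (4 : ℝ) ≤ ‖z‖ := by nlinarith
  have h2k : (2 : ℝ) * ‖kstar‖ ≥ ‖z‖ - 1/4 := by
    have : (2 : ℝ) • kstar = z - gradient h kstar := by rw [← hfixed]; module
    have hn : ‖(2 : ℝ) • kstar‖ = 2 * ‖kstar‖ := by
      rw [norm_smul]; norm_num
    have h1 : ‖z‖ - ‖gradient h kstar‖ ≤ ‖z - gradient h kstar‖ := norm_sub_norm_le _ _
    have h2 := hgbd kstar
    rw [← this, hn] at h1
    linarith
  have hks4 : ‖z‖ / 4 ≤ ‖kstar‖ := by linarith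
  have hksk0 : k₀ ≤ ‖kstar‖ := by linarith
  have hgb := hgbd1 kstar hksk0
  have hmono : ‖kstar‖ ^ (-(γ₂ - γ₀)) ≤ (‖z‖ / 4) ^ (-(γ₂ - γ₀)) :=
    Real.rpow_le_rpow_of_nonpos (by linarith) hks4 (by linarith)
  have hsplit : (‖z‖ / 4) ^ (-(γ₂ - γ₀)) = ‖z‖ ^ (-(γ₂ - γ₀)) * 4 ^ (γ₂ - γ₀) := by
    rw [Real.div_rpow (norm_nonneg z) (by norm_num : (0:ℝ) ≤ 4)]
    rw [Real.rpow_neg (by norm_num : (0:ℝ) ≤ 4)]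
    field_simp
  rw [hnorm]
  have hfinal : ‖gradient h kstar‖ ≤ 2 * C * (‖z‖ ^ (-(γ₂ - γ₀)) * 4 ^ (γ₂ - γ₀)) := by
    rw [← hsplit]
    calc ‖gradient h kstar‖ ≤ 2 * C * ‖kstar‖ ^ (-(γ₂ - γ₀)) := hgb
      _ ≤ 2 * C * (‖z‖ / 4) ^ (-(γ₂ - γ₀)) := by nlinarith
  calc (1/2 : ℝ) * ‖gradient h kstar‖
      ≤ (1/2) * (2 * C * (‖z‖ ^ (-(γ₂ - γ₀)) * 4 ^ (γ₂ - γ₀))) := by linarith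
    _ = C * 4 ^ (γ₂ - γ₀) * ‖z‖ ^ (-(γ₂ - γ₀)) := by ring
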